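/- In every execution of the Hemlock transition-system model, for every lock L and every thread T_i, at every reachable state there is at most one thread spinning in the entry code waiting for Grant T_i to become some L (i.e., at most one thread per lock waits on any given thread's Grant field). -/
import Mathlib


namespace Hemlock

/-- Program counter locations of a thread in the Hemlock algorithm. -/
inductive PC where
  | remainder  -- in the remainder section
  | entrySpin  -- in the entry code, spinning on the predecessor's Grant field
  | crit       -- in the critical section
  | exitCAS    -- in the exit code, about to perform the CAS on Tail
  | exitDoor   -- in the exit code, about to perform the exit doorstep (write Grant self := some L)
  | exitSpin   -- in the exit code, spinning on its own Grant field
deriving DecidableEq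

/-- A global state of the Hemlock transition system. -/
structure St (Thread Lock : Type) where
  Tail : Lock → Option Thread        -- the Tail field of each lock
  Grant : Thread → Option Lock       -- the Grant field of each thread
  pc : Thread → PC                   -- program counter of each thread
  lk : Thread → Option Lock          -- the lock currently being acquired/released by each thread
  pred : Thread → Option Thread      -- value returned by each thread's last SWAP

variable {Thread Lock : Type} [DecidableEq Thread] [DecidableEq Lock]

/-- The initial state: all Tail and Grant fields are none, all threads in the remainder. -/
def initSt : St Thread Lock :=
  ⟨fun _ => none, fun _ => none, fun _ => .remainder, fun _ => none, fun _ => none⟩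

/-- One atomic transition of thread `t`. -/
inductive Step (t : Thread) : St Thread Lock → St Thread Lock → Prop where
  /-- a step inside the remainder section -/
  | remainderStay (s : St Thread Lock) (h : s.pc t = .remainder) :
      Step t s s
  /-- the entry doorstep for lock `L`: atomic SWAP on `Tail L`, storing the old value in `pred`;
      if the SWAP returned `none` the thread enters the critical section, else it spins -/
  | doorstep (s : St Thread Lock) (L : Lock) (h : s.pc t = .remainder) :
      Step t s ⟨Function.update s.Tail L (some t), s.Grant,
        Function.update s.pc t (if s.Tail L = none then .crit else .entrySpin),
        Function.update s.lk t (some L),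
        Function.update s.pred t (s.Tail L)⟩
  /-- entry-code busy-wait loop: read `Grant p`; it is not yet `some L`, keep spinning -/
  | spinWait (s : St Thread Lock) (p : Thread) (L : Lock)
      (h : s.pc t = .entrySpin) (hp : s.pred t = some p) (hl : s.lk t = some L)
      (hg : s.Grant p ≠ some L) :
      Step t s s
  /-- entry-code busy-wait loop: read `Grant p = some L`; write `Grant p := none`
      and enter the critical section -/
  | spinAcquire (s : St Thread Lock) (p : Thread) (L : Lock)
      (h : s.pc t = .entrySpin) (hp : s.pred t = some p) (hl : s.lk t = some L)
      (hg : s.Grant p = some L) :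
      Step t s ⟨s.Tail, Function.update s.Grant p none,
        Function.update s.pc t .crit, s.lk, s.pred⟩
  /-- a step inside the critical section -/
  | critStay (s : St Thread Lock) (h : s.pc t = .crit) :
      Step t s s
  /-- leave the critical section and begin the exit code -/
  | exitStart (s : St Thread Lock) (h : s.pc t = .crit) :
      Step t s ⟨s.Tail, s.Grant, Function.update s.pc t .exitCAS, s.lk, s.pred⟩
  /-- successful CAS: `Tail L = some self`, so set `Tail L := none` and
      complete the exit code, returning to the remainder section -/
  | casSucc (s : St Thread Lock) (L : Lock)
      (h : s.pc t = .exitCAS) (hl : s.lk t = some L) (ht : s.Tail L = some t) :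
      Step t s ⟨Function.update s.Tail L none, s.Grant,
        Function.update s.pc t .remainder, Function.update s.lk t none, s.pred⟩
  /-- failed CAS: `Tail L ≠ some self`; proceed to the exit doorstep -/
  | casFail (s : St Thread Lock) (L : Lock)
      (h : s.pc t = .exitCAS) (hl : s.lk t = some L) (ht : s.Tail L ≠ some t) :
      Step t s ⟨s.Tail, s.Grant, Function.update s.pc t .exitDoor, s.lk, s.pred⟩
  /-- the exit doorstep: write `Grant self := some L` and start spinning on `Grant self` -/
  | exitDoorstep (s : St Thread Lock) (L : Lock)
      (h : s.pc t = .exitDoor) (hl : s.lk t = some L) :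
      Step t s ⟨s.Tail, Function.update s.Grant t (some L),
        Function.update s.pc t .exitSpin, s.lk, s.pred⟩
  /-- exit-code busy-wait loop: read `Grant self`; it is not yet `none`, keep spinning -/
  | exitSpinWait (s : St Thread Lock) (h : s.pc t = .exitSpin) (hg : s.Grant t ≠ none) :
      Step t s s
  /-- exit-code busy-wait loop: read `Grant self = none`; complete the exit code,
      returning to the remainder section -/
  | exitDone (s : St Thread Lock) (h : s.pc t = .exitSpin) (hg : s.Grant t = none) :
      Step t s ⟨s.Tail, s.Grant, Function.update s.pc t .remainder,
        Function.update s.lk t none, s.pred⟩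

/-- An execution of the Hemlock transition system: an infinite sequence of states starting
    from the initial state, where each step is one transition of the scheduled thread;
    every thread whose program counter is in the entry, exit or critical section eventually
    takes another step, and every thread leaves each critical section after finitely
    many steps. -/
structure Execution (Thread Lock : Type) [DecidableEq Thread] [DecidableEq Lock]
    [Fintype Thread] where
  states : ℕ → St Thread Lock
  sched : ℕ → Thread
  init : states 0 = initSt
  steps : ∀ n, Step (sched n) (states n) (states (n + 1))
  fair : ∀ n t, (states n).pc t ≠ PC.remainder → ∃ m, n ≤ m ∧ sched m = t
  critFinite : ∀ n t, (states n).pc t = PC.crit → ∃ m, n ≤ m ∧ (states m).pc t ≠ PC.crit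

variable [Fintype Thread]

/-- Thread `t` executes the entry doorstep (the SWAP) for lock `L` at time `n`. -/
def doorstepAt (E : Execution Thread Lock) (n : ℕ) (t : Thread) (L : Lock) : Prop :=
  E.sched n = t ∧ (E.states n).pc t = PC.remainder ∧
    (E.states (n + 1)).pc t ≠ PC.remainder ∧ (E.states (n + 1)).lk t = some L

/-- Thread `t` performs the CAS step of the exit code for lock `L` at time `n`
    (successful or not). -/
def casAt (E : Execution Thread Lock) (n : ℕ) (t : Thread) (L : Lock) : Prop :=
  E.sched n = t ∧ (E.states n).pc t = PC.exitCAS ∧ (E.states n).lk t = some L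

/-- Thread `t` performs the exit doorstep (the write `Grant t := some L`) at time `n`. -/
def exitDoorAt (E : Execution Thread Lock) (n : ℕ) (t : Thread) (L : Lock) : Prop :=
  E.sched n = t ∧ (E.states n).pc t = PC.exitDoor ∧ (E.states n).lk t = some L

/-- Thread `t` is in the critical section protected by `L` in state `s`. -/
def inCS (s : St Thread Lock) (t : Thread) (L : Lock) : Prop :=
  s.pc t = PC.crit ∧ s.lk t = some L

/-- Thread `t` is in the entry code for lock `L` in state `s`. -/
def inEntry (s : St Thread Lock) (t : Thread) (L : Lock) : Prop :=
  s.pc t = PC.entrySpin ∧ s.lk t = some L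

/-- Thread `t` enters the critical section protected by `L` at step `m`. -/
def entersCSAt (E : Execution Thread Lock) (m : ℕ) (t : Thread) (L : Lock) : Prop :=
  E.sched m = t ∧ (E.states m).pc t ≠ PC.crit ∧
    (E.states (m + 1)).pc t = PC.crit ∧ (E.states (m + 1)).lk t = some L

/-- Thread `t` completes its critical section protected by `L` at step `k`
    (leaving the critical section and beginning the exit code). -/
def exitsCSAt (E : Execution Thread Lock) (k : ℕ) (t : Thread) (L : Lock) : Prop :=
  E.sched k = t ∧ (E.states k).pc t = PC.crit ∧ (E.states k).lk t = some L ∧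
    (E.states (k + 1)).pc t ≠ PC.crit

/-- Thread `t` completes the exit code for lock `L` at step `k`
    (returning to the remainder section). -/
def completesExitAt (E : Execution Thread Lock) (k : ℕ) (t : Thread) (L : Lock) : Prop :=
  E.sched k = t ∧ (E.states k).lk t = some L ∧
    (E.states k).pc t ≠ PC.remainder ∧ (E.states (k + 1)).pc t = PC.remainder

/-- `m` is the first time at or after `n` at which thread `t` enters the
    critical section protected by `L`. -/
def firstEntryAfter (E : Execution Thread Lock) (n m : ℕ) (t : Thread) (L : Lock) : Prop :=
  n ≤ m ∧ entersCSAt E m t L ∧ ∀ k, n ≤ k → k < m → ¬ entersCSAt E k t L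

/-- At time `n`, thread `T` is spinning in the entry code waiting for `Grant w`
    to become `some L`: its next step reads `Grant w` inside the entry-code
    busy-wait loop with current lock `L` and `pred = some w`. -/
def spinningEntryFor (E : Execution Thread Lock) (n : ℕ) (T w : Thread) (L : Lock) : Prop :=
  (E.states n).pc T = PC.entrySpin ∧ (E.states n).pred T = some w ∧
    (E.states n).lk T = some L

/-- At time `n`, thread `T` is spinning on the word `Grant w`: its next step reads
    `Grant w` inside one of the two busy-wait loops (the entry-code loop with
    `pred = some w`, or the exit-code loop executed by `w` itself). -/
def spinningOn (E : Execution Thread Lock) (n : ℕ) (T w : Thread) : Prop :=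
  ((E.states n).pc T = PC.entrySpin ∧ (E.states n).pred T = some w) ∨
    (T = w ∧ (E.states n).pc T = PC.exitSpin)

/-- Lock `L` is associated with thread `T` at time `n`: `T` has executed the entry
    doorstep for `L` and has not yet completed the exit code for `L`. -/
def associated (E : Execution Thread Lock) (n : ℕ) (T : Thread) (L : Lock) : Prop :=
  ∃ m, m < n ∧ doorstepAt E m T L ∧ ∀ k, m < k → k < n → ¬ completesExitAt E k T L

section OneWaiterAux

variable {Thread Lock : Type} [DecidableEq Thread] [DecidableEq Lock]

/-- No thread is spinning in the entry code with predecessor `w`. -/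
def NoSpinOn (s : St Thread Lock) (w : Thread) : Prop :=
  ∀ T, ¬ (s.pc T = PC.entrySpin ∧ s.pred T = some w)

/-- The global inductive invariant. -/
def GInv (s : St Thread Lock) : Prop :=
  (∀ L w, s.Tail L = some w → s.lk w = some L ∧ s.pc w ≠ PC.remainder) ∧
  (∀ L w, s.Tail L = some w → NoSpinOn s w) ∧
  (∀ w T1 T2, s.pc T1 = PC.entrySpin → s.pred T1 = some w →
      s.pc T2 = PC.entrySpin → s.pred T2 = some w → T1 = T2) ∧
  (∀ w, s.pc w = PC.remainder → NoSpinOn s w) ∧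
  (∀ w, s.pc w = PC.exitSpin → s.Grant w = none → NoSpinOn s w) ∧
  (∀ L w, (s.pc w = PC.exitDoor ∨ s.pc w = PC.exitSpin) → s.lk w = some L →
      s.Tail L ≠ some w)

omit [DecidableEq Thread] [DecidableEq Lock] in
lemma ginv_init : GInv (initSt : St Thread Lock) := by
  refine ⟨?_, ?_, ?_, ?_, ?_, ?_⟩ <;>
    simp [initSt, NoSpinOn]

lemma ginv_step {t : Thread} {s s' : St Thread Lock}
    (hst : Step t s s') (h : GInv s) : GInv s' := by
  obtain ⟨I1, I2, I3, I4, I5, I7⟩ := h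
  cases hst with
  | remainderStay h => exact ⟨I1, I2, I3, I4, I5, I7⟩
  | spinWait p L h hp hl hg => exact ⟨I1, I2, I3, I4, I5, I7⟩
  | critStay h => exact ⟨I1, I2, I3, I4, I5, I7⟩
  | exitSpinWait h hg => exact ⟨I1, I2, I3, I4, I5, I7⟩
  | doorstep L h =>
      refine ⟨?_, ?_, ?_, ?_, ?_, ?_⟩
      · -- I1
        intro M w hw
        dsimp only at hw ⊢
        by_cases hM : M = L
        · subst hM
          rw [Function.update_self] at hw
          cases hw
          constructor
          · simp [Function.update_self]
          · simp only [Function.update_self]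
            split <;> simp
        · rw [Function.update_of_ne hM] at hw
          obtain ⟨hlk, hpc⟩ := I1 M w hw
          have hwt : w ≠ t := fun he => hpc (he ▸ h)
          rw [Function.update_of_ne hwt, Function.update_of_ne hwt]
          exact ⟨hlk, hpc⟩
      · -- I2
        intro M w hw T ⟨hT1, hT2⟩
        dsimp only at hw hT1 hT2
        by_cases hTt : T = t
        · subst hTt
          rw [Function.update_self] at hT2
          have htail : s.Tail L = some w := hT2
          obtain ⟨hlkw, hpcw⟩ := I1 L w htail
          by_cases hM : M = L
          · subst hM
            rw [Function.update_self] at hw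
            cases hw
            exact hpcw h
          · rw [Function.update_of_ne hM] at hw
            obtain ⟨hlkw', _⟩ := I1 M w hw
            rw [hlkw] at hlkw'
            exact hM (Option.some.inj hlkw').symm
        · rw [Function.update_of_ne hTt] at hT1 hT2
          by_cases hM : M = L
          · subst hM
            rw [Function.update_self] at hw
            cases hw
            exact I4 t h T ⟨hT1, hT2⟩
          · rw [Function.update_of_ne hM] at hw
            exact I2 M w hw T ⟨hT1, hT2⟩
      · -- I3
        intro w T1 T2 h1p h1d h2p h2d
        dsimp only at h1p h1d h2p h2d
        by_cases h1t : T1 = t <;> by_cases h2t : T2 = t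
        · rw [h1t, h2t]
        · subst h1t
          rw [Function.update_self] at h1d
          rw [Function.update_of_ne h2t] at h2p h2d
          exact absurd ⟨h2p, h2d⟩ (I2 L w h1d T2)
        · subst h2t
          rw [Function.update_self] at h2d
          rw [Function.update_of_ne h1t] at h1p h1d
          exact absurd ⟨h1p, h1d⟩ (I2 L w h2d T1)
        · rw [Function.update_of_ne h1t] at h1p h1d
          rw [Function.update_of_ne h2t] at h2p h2d
          exact I3 w T1 T2 h1p h1d h2p h2d
      · -- I4
        intro w hw T ⟨hT1, hT2⟩
        dsimp only at hw hT1 hT2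
        have hwt : w ≠ t := by
          intro he; subst he
          rw [Function.update_self] at hw
          split at hw <;> simp at hw
        rw [Function.update_of_ne hwt] at hw
        by_cases hTt : T = t
        · subst hTt
          rw [Function.update_self] at hT2
          exact (I1 L w hT2).2 hw
        · rw [Function.update_of_ne hTt] at hT1 hT2
          exact I4 w hw T ⟨hT1, hT2⟩
      · -- I5
        intro w hw hg T ⟨hT1, hT2⟩
        dsimp only at hw hg hT1 hT2
        have hwt : w ≠ t := by
          intro he; subst he
          rw [Function.update_self] at hw
          split at hw <;> simp at hw
        rw [Function.update_of_ne hwt] at hw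
        by_cases hTt : T = t
        · subst hTt
          rw [Function.update_self] at hT2
          have := (I1 L w hT2).1
          exact I7 L w (Or.inr hw) this hT2
        · rw [Function.update_of_ne hTt] at hT1 hT2
          exact I5 w hw hg T ⟨hT1, hT2⟩
      · -- I7
        intro M w hpc hlk
        dsimp only at hpc hlk ⊢
        have hwt : w ≠ t := by
          intro he; subst he
          rw [Function.update_self] at hpc
          rcases hpc with hpc | hpc <;> split at hpc <;> simp at hpc
        rw [Function.update_of_ne hwt] at hpc hlk
        by_cases hM : M = L
        · subst hM
          rw [Function.update_self]
          intro he
          exact hwt (Option.some.inj he).symm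
        · rw [Function.update_of_ne hM]
          exact I7 M w hpc hlk
  | spinAcquire p L h hp hl hg =>
      refine ⟨?_, ?_, ?_, ?_, ?_, ?_⟩
      · intro M w hw
        dsimp only at hw ⊢
        obtain ⟨hlk, hpc⟩ := I1 M w hw
        refine ⟨hlk, ?_⟩
        by_cases hwt : w = t
        · subst hwt; rw [Function.update_self]; simp
        · rw [Function.update_of_ne hwt]; exact hpc
      · intro M w hw T ⟨hT1, hT2⟩
        dsimp only at hw hT1 hT2
        by_cases hTt : T = t
        · subst hTt; rw [Function.update_self] at hT1; exact absurd hT1 (by simp)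
        · rw [Function.update_of_ne hTt] at hT1
          exact I2 M w hw T ⟨hT1, hT2⟩
      · intro w T1 T2 h1p h1d h2p h2d
        dsimp only at h1p h1d h2p h2d
        by_cases h1t : T1 = t
        · subst h1t; rw [Function.update_self] at h1p; exact absurd h1p (by simp)
        · by_cases h2t : T2 = t
          · subst h2t; rw [Function.update_self] at h2p; exact absurd h2p (by simp)
          · rw [Function.update_of_ne h1t] at h1p
            rw [Function.update_of_ne h2t] at h2p
            exact I3 w T1 T2 h1p h1d h2p h2d
      · intro w hw T ⟨hT1, hT2⟩
        dsimp only at hw hT1 hT2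
        have hwt : w ≠ t := by
          intro he; subst he; rw [Function.update_self] at hw; simp at hw
        rw [Function.update_of_ne hwt] at hw
        by_cases hTt : T = t
        · subst hTt; rw [Function.update_self] at hT1; exact absurd hT1 (by simp)
        · rw [Function.update_of_ne hTt] at hT1
          exact I4 w hw T ⟨hT1, hT2⟩
      · intro w hw hg' T ⟨hT1, hT2⟩
        dsimp only at hw hg' hT1 hT2
        have hwt : w ≠ t := by
          intro he; subst he; rw [Function.update_self] at hw; simp at hw
        rw [Function.update_of_ne hwt] at hw
        by_cases hTt : T = t
        · subst hTt; rw [Function.update_self] at hT1; exact absurd hT1 (by simp)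
        · rw [Function.update_of_ne hTt] at hT1
          by_cases hwp : w = p
          · subst hwp
            have := I3 w T t hT1 hT2 h hp
            exact hTt this
          · rw [Function.update_of_ne hwp] at hg'
            exact I5 w hw hg' T ⟨hT1, hT2⟩
      · intro M w hpc hlk
        dsimp only at hpc hlk ⊢
        have hwt : w ≠ t := by
          intro he; subst he; rw [Function.update_self] at hpc
          rcases hpc with hpc | hpc <;> simp at hpc
        rw [Function.update_of_ne hwt] at hpc
        exact I7 M w hpc hlk
  | exitStart h =>
      refine ⟨?_, ?_, ?_, ?_, ?_, ?_⟩
      · intro M w hw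
        dsimp only at hw ⊢
        obtain ⟨hlk, hpc⟩ := I1 M w hw
        refine ⟨hlk, ?_⟩
        by_cases hwt : w = t
        · subst hwt; rw [Function.update_self]; simp
        · rw [Function.update_of_ne hwt]; exact hpc
      · intro M w hw T ⟨hT1, hT2⟩
        dsimp only at hw hT1 hT2
        by_cases hTt : T = t
        · subst hTt; rw [Function.update_self] at hT1; exact absurd hT1 (by simp)
        · rw [Function.update_of_ne hTt] at hT1
          exact I2 M w hw T ⟨hT1, hT2⟩
      · intro w T1 T2 h1p h1d h2p h2d
        dsimp only at h1p h1d h2p h2d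
        by_cases h1t : T1 = t
        · subst h1t; rw [Function.update_self] at h1p; exact absurd h1p (by simp)
        · by_cases h2t : T2 = t
          · subst h2t; rw [Function.update_self] at h2p; exact absurd h2p (by simp)
          · rw [Function.update_of_ne h1t] at h1p
            rw [Function.update_of_ne h2t] at h2p
            exact I3 w T1 T2 h1p h1d h2p h2d
      · intro w hw T ⟨hT1, hT2⟩
        dsimp only at hw hT1 hT2
        have hwt : w ≠ t := by
          intro he; subst he; rw [Function.update_self] at hw; simp at hw
        rw [Function.update_of_ne hwt] at hw
        by_cases hTt : T = t
        · subst hTt; rw [Function.update_self] at hT1; exact absurd hT1 (by simp)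
        · rw [Function.update_of_ne hTt] at hT1
          exact I4 w hw T ⟨hT1, hT2⟩
      · intro w hw hg' T ⟨hT1, hT2⟩
        dsimp only at hw hg' hT1 hT2
        have hwt : w ≠ t := by
          intro he; subst he; rw [Function.update_self] at hw; simp at hw
        rw [Function.update_of_ne hwt] at hw
        by_cases hTt : T = t
        · subst hTt; rw [Function.update_self] at hT1; exact absurd hT1 (by simp)
        · rw [Function.update_of_ne hTt] at hT1
          exact I5 w hw hg' T ⟨hT1, hT2⟩
      · intro M w hpc hlk
        dsimp only at hpc hlk ⊢
        have hwt : w ≠ t := by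
          intro he; subst he; rw [Function.update_self] at hpc
          rcases hpc with hpc | hpc <;> simp at hpc
        rw [Function.update_of_ne hwt] at hpc
        exact I7 M w hpc hlk
  | casSucc L h hl ht =>
      refine ⟨?_, ?_, ?_, ?_, ?_, ?_⟩
      · intro M w hw
        dsimp only at hw ⊢
        by_cases hM : M = L
        · subst hM; rw [Function.update_self] at hw; exact absurd hw (by simp)
        · rw [Function.update_of_ne hM] at hw
          obtain ⟨hlk, hpc⟩ := I1 M w hw
          have hwt : w ≠ t := by
            intro he; subst he; rw [hl] at hlk
            exact hM (Option.some.inj hlk).symm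
          rw [Function.update_of_ne hwt, Function.update_of_ne hwt]
          exact ⟨hlk, hpc⟩
      · intro M w hw T ⟨hT1, hT2⟩
        dsimp only at hw hT1 hT2
        by_cases hM : M = L
        · subst hM; rw [Function.update_self] at hw; exact absurd hw (by simp)
        · rw [Function.update_of_ne hM] at hw
          by_cases hTt : T = t
          · subst hTt; rw [Function.update_self] at hT1; exact absurd hT1 (by simp)
          · rw [Function.update_of_ne hTt] at hT1
            exact I2 M w hw T ⟨hT1, hT2⟩
      · intro w T1 T2 h1p h1d h2p h2d
        dsimp only at h1p h1d h2p h2d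
        by_cases h1t : T1 = t
        · subst h1t; rw [Function.update_self] at h1p; exact absurd h1p (by simp)
        · by_cases h2t : T2 = t
          · subst h2t; rw [Function.update_self] at h2p; exact absurd h2p (by simp)
          · rw [Function.update_of_ne h1t] at h1p
            rw [Function.update_of_ne h2t] at h2p
            exact I3 w T1 T2 h1p h1d h2p h2d
      · intro w hw T ⟨hT1, hT2⟩
        dsimp only at hw hT1 hT2
        by_cases hTt : T = t
        · subst hTt; rw [Function.update_self] at hT1; exact absurd hT1 (by simp)
        · rw [Function.update_of_ne hTt] at hT1
          by_cases hwt : w = t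
          · exact I2 L t ht T ⟨hT1, hwt ▸ hT2⟩
          · rw [Function.update_of_ne hwt] at hw
            exact I4 w hw T ⟨hT1, hT2⟩
      · intro w hw hg' T ⟨hT1, hT2⟩
        dsimp only at hw hg' hT1 hT2
        have hwt : w ≠ t := by
          intro he; subst he; rw [Function.update_self] at hw; simp at hw
        rw [Function.update_of_ne hwt] at hw
        by_cases hTt : T = t
        · subst hTt; rw [Function.update_self] at hT1; exact absurd hT1 (by simp)
        · rw [Function.update_of_ne hTt] at hT1
          exact I5 w hw hg' T ⟨hT1, hT2⟩
      · intro M w hpc hlk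
        dsimp only at hpc hlk ⊢
        have hwt : w ≠ t := by
          intro he; subst he; rw [Function.update_self] at hpc
          rcases hpc with hpc | hpc <;> simp at hpc
        rw [Function.update_of_ne hwt] at hpc hlk
        by_cases hM : M = L
        · subst hM; rw [Function.update_self]; simp
        · rw [Function.update_of_ne hM]
          exact I7 M w hpc hlk
  | casFail L h hl ht =>
      refine ⟨?_, ?_, ?_, ?_, ?_, ?_⟩
      · intro M w hw
        dsimp only at hw ⊢
        obtain ⟨hlk, hpc⟩ := I1 M w hw
        refine ⟨hlk, ?_⟩
        by_cases hwt : w = t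
        · subst hwt; rw [Function.update_self]; simp
        · rw [Function.update_of_ne hwt]; exact hpc
      · intro M w hw T ⟨hT1, hT2⟩
        dsimp only at hw hT1 hT2
        by_cases hTt : T = t
        · subst hTt; rw [Function.update_self] at hT1; exact absurd hT1 (by simp)
        · rw [Function.update_of_ne hTt] at hT1
          exact I2 M w hw T ⟨hT1, hT2⟩
      · intro w T1 T2 h1p h1d h2p h2d
        dsimp only at h1p h1d h2p h2d
        by_cases h1t : T1 = t
        · subst h1t; rw [Function.update_self] at h1p; exact absurd h1p (by simp)
        · by_cases h2t : T2 = t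
          · subst h2t; rw [Function.update_self] at h2p; exact absurd h2p (by simp)
          · rw [Function.update_of_ne h1t] at h1p
            rw [Function.update_of_ne h2t] at h2p
            exact I3 w T1 T2 h1p h1d h2p h2d
      · intro w hw T ⟨hT1, hT2⟩
        dsimp only at hw hT1 hT2
        have hwt : w ≠ t := by
          intro he; subst he; rw [Function.update_self] at hw; simp at hw
        rw [Function.update_of_ne hwt] at hw
        by_cases hTt : T = t
        · subst hTt; rw [Function.update_self] at hT1; exact absurd hT1 (by simp)
        · rw [Function.update_of_ne hTt] at hT1
          exact I4 w hw T ⟨hT1, hT2⟩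
      · intro w hw hg' T ⟨hT1, hT2⟩
        dsimp only at hw hg' hT1 hT2
        have hwt : w ≠ t := by
          intro he; subst he; rw [Function.update_self] at hw; simp at hw
        rw [Function.update_of_ne hwt] at hw
        by_cases hTt : T = t
        · subst hTt; rw [Function.update_self] at hT1; exact absurd hT1 (by simp)
        · rw [Function.update_of_ne hTt] at hT1
          exact I5 w hw hg' T ⟨hT1, hT2⟩
      · intro M w hpc hlk
        dsimp only at hpc hlk ⊢
        by_cases hwt : w = t
        · subst hwt
          have hM : M = L := by rw [hl] at hlk; exact (Option.some.inj hlk).symm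
          subst hM
          exact ht
        · rw [Function.update_of_ne hwt] at hpc
          exact I7 M w hpc hlk
  | exitDoorstep L h hl =>
      refine ⟨?_, ?_, ?_, ?_, ?_, ?_⟩
      · intro M w hw
        dsimp only at hw ⊢
        obtain ⟨hlk, hpc⟩ := I1 M w hw
        refine ⟨hlk, ?_⟩
        by_cases hwt : w = t
        · subst hwt; rw [Function.update_self]; simp
        · rw [Function.update_of_ne hwt]; exact hpc
      · intro M w hw T ⟨hT1, hT2⟩
        dsimp only at hw hT1 hT2
        by_cases hTt : T = t
        · subst hTt; rw [Function.update_self] at hT1; exact absurd hT1 (by simp)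
        · rw [Function.update_of_ne hTt] at hT1
          exact I2 M w hw T ⟨hT1, hT2⟩
      · intro w T1 T2 h1p h1d h2p h2d
        dsimp only at h1p h1d h2p h2d
        by_cases h1t : T1 = t
        · subst h1t; rw [Function.update_self] at h1p; exact absurd h1p (by simp)
        · by_cases h2t : T2 = t
          · subst h2t; rw [Function.update_self] at h2p; exact absurd h2p (by simp)
          · rw [Function.update_of_ne h1t] at h1p
            rw [Function.update_of_ne h2t] at h2p
            exact I3 w T1 T2 h1p h1d h2p h2d
      · intro w hw T ⟨hT1, hT2⟩
        dsimp only at hw hT1 hT2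
        have hwt : w ≠ t := by
          intro he; subst he; rw [Function.update_self] at hw; simp at hw
        rw [Function.update_of_ne hwt] at hw
        by_cases hTt : T = t
        · subst hTt; rw [Function.update_self] at hT1; exact absurd hT1 (by simp)
        · rw [Function.update_of_ne hTt] at hT1
          exact I4 w hw T ⟨hT1, hT2⟩
      · intro w hw hg' T ⟨hT1, hT2⟩
        dsimp only at hw hg' hT1 hT2
        by_cases hwt : w = t
        · subst hwt; rw [Function.update_self] at hg'; exact absurd hg' (by simp)
        · rw [Function.update_of_ne hwt] at hw
          rw [Function.update_of_ne hwt] at hg'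
          by_cases hTt : T = t
          · subst hTt; rw [Function.update_self] at hT1; exact absurd hT1 (by simp)
          · rw [Function.update_of_ne hTt] at hT1
            exact I5 w hw hg' T ⟨hT1, hT2⟩
      · intro M w hpc hlk
        dsimp only at hpc hlk ⊢
        by_cases hwt : w = t
        · have hM : M = L := by rw [hwt, hl] at hlk; exact (Option.some.inj hlk).symm
          rw [hM, hwt]
          exact I7 L t (Or.inl h) hl
        · rw [Function.update_of_ne hwt] at hpc
          exact I7 M w hpc hlk
  | exitDone h hg =>
      refine ⟨?_, ?_, ?_, ?_, ?_, ?_⟩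
      · intro M w hw
        dsimp only at hw ⊢
        obtain ⟨hlk, hpc⟩ := I1 M w hw
        have hwt : w ≠ t := by
          intro he; subst he
          exact I7 M w (Or.inr h) hlk hw
        rw [Function.update_of_ne hwt, Function.update_of_ne hwt]
        exact ⟨hlk, hpc⟩
      · intro M w hw T ⟨hT1, hT2⟩
        dsimp only at hw hT1 hT2
        by_cases hTt : T = t
        · subst hTt; rw [Function.update_self] at hT1; exact absurd hT1 (by simp)
        · rw [Function.update_of_ne hTt] at hT1
          exact I2 M w hw T ⟨hT1, hT2⟩
      · intro w T1 T2 h1p h1d h2p h2d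
        dsimp only at h1p h1d h2p h2d
        by_cases h1t : T1 = t
        · subst h1t; rw [Function.update_self] at h1p; exact absurd h1p (by simp)
        · by_cases h2t : T2 = t
          · subst h2t; rw [Function.update_self] at h2p; exact absurd h2p (by simp)
          · rw [Function.update_of_ne h1t] at h1p
            rw [Function.update_of_ne h2t] at h2p
            exact I3 w T1 T2 h1p h1d h2p h2d
      · intro w hw T ⟨hT1, hT2⟩
        dsimp only at hw hT1 hT2
        by_cases hTt : T = t
        · subst hTt; rw [Function.update_self] at hT1; exact absurd hT1 (by simp)
        · rw [Function.update_of_ne hTt] at hT1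
          by_cases hwt : w = t
          · exact I5 t h hg T ⟨hT1, hwt ▸ hT2⟩
          · rw [Function.update_of_ne hwt] at hw
            exact I4 w hw T ⟨hT1, hT2⟩
      · intro w hw hg' T ⟨hT1, hT2⟩
        dsimp only at hw hg' hT1 hT2
        have hwt : w ≠ t := by
          intro he; subst he; rw [Function.update_self] at hw; simp at hw
        rw [Function.update_of_ne hwt] at hw
        by_cases hTt : T = t
        · subst hTt; rw [Function.update_self] at hT1; exact absurd hT1 (by simp)
        · rw [Function.update_of_ne hTt] at hT1
          exact I5 w hw hg' T ⟨hT1, hT2⟩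
      · intro M w hpc hlk
        dsimp only at hpc hlk ⊢
        have hwt : w ≠ t := by
          intro he; subst he; rw [Function.update_self] at hpc
          rcases hpc with hpc | hpc <;> simp at hpc
        rw [Function.update_of_ne hwt] at hpc hlk
        exact I7 M w hpc hlk

lemma ginv_all [Fintype Thread] (E : Execution Thread Lock) (n : ℕ) :
    GInv (E.states n) := by
  induction n with
  | zero => rw [E.init]; exact ginv_init
  | succ n ih => exact ginv_step (E.steps n) ih

end OneWaiterAux

/-- For every lock `L` and thread `Ti`, at every reachable state there is at most one
thread spinning in the entry code waiting for `Grant Ti` to become `some L`. -/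
theorem one_waiter_per_lock {Thread Lock : Type} [DecidableEq Thread] [DecidableEq Lock]
    [Fintype Thread] (E : Execution Thread Lock) (L : Lock) (Ti : Thread) (n : ℕ)
    (T1 T2 : Thread)
    (h1 : spinningEntryFor E n T1 Ti L) (h2 : spinningEntryFor E n T2 Ti L) :
    T1 = T2 := by
  obtain ⟨-, -, I3, -, -, -⟩ := ginv_all E n
  exact I3 Ti T1 T2 h1.1 h1.2.1 h2.1 h2.2.1

end Hemlock
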